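/- Let X be a Zariski space and κ an infinite cardinal. A point p ∈ X is κ-separable in X if and only if p is κ-separable in some locally closed subset Y of X containing p, where Y is endowed with the subspace topology (in which case Y is again a Zariski space). -/
import Mathlib


universe u

/-- A Zariski space: a noetherian topological space in which every nonempty irreducible closed
subset is the closure of a unique point. -/
def IsZariskiSpace (X : Type u) [TopologicalSpace X] : Prop :=
  TopologicalSpace.NoetherianSpace X ∧
    ∀ S : Set X, IsClosed S → IsIrreducible S → ∃! p : X, closure {p} = S

/-- A point `p` is `κ`-separable if `closure {p} \ {p}` is the union of the closures `closure {q}`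
for `q` running through a subset `Λ` of `closure {p} \ {p}` of cardinality `< κ`. -/
def KappaSeparable {X : Type u} [TopologicalSpace X] (κ : Cardinal.{u}) (p : X) : Prop :=
  ∃ Λ : Set X, Λ ⊆ closure {p} \ {p} ∧ Cardinal.mk Λ < κ ∧
    closure {p} \ {p} = ⋃ q ∈ Λ, closure {q}

lemma kappa_homeo {X Z : Type u} [TopologicalSpace X] [TopologicalSpace Z]
    (e : X ≃ₜ Z) (κ : Cardinal.{u}) (p : X) (h : KappaSeparable κ p) :
    KappaSeparable κ (e p) := by
  obtain ⟨Λ, hsub, hcard, heq⟩ := h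
  refine ⟨e '' Λ, ?_, ?_, ?_⟩
  · rintro _ ⟨q, hq, rfl⟩
    rw [← Set.image_singleton, ← e.image_closure, ← Set.image_diff e.injective]
    exact Set.mem_image_of_mem _ (hsub hq)
  · rwa [Cardinal.mk_image_eq e.injective]
  · rw [← Set.image_singleton, ← e.image_closure, ← Set.image_diff e.injective, heq,
      Set.image_iUnion₂, Set.biUnion_image]
    simp only [e.image_closure, Set.image_singleton]

/-- `κ`-separability (for an infinite cardinal `κ`) can be detected on any locally closed subset
containing the point, endowed with the subspace topology. -/
theorem kappaSeparable_iff_exists_locallyClosed {X : Type u} [TopologicalSpace X]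
    (hX : IsZariskiSpace X) (κ : Cardinal.{u}) (hκ : Cardinal.aleph0 ≤ κ) (p : X) :
    KappaSeparable κ p ↔
      ∃ Y : Set X, IsLocallyClosed Y ∧ ∃ hp : p ∈ Y, KappaSeparable κ (⟨p, hp⟩ : Y) := by
  constructor
  · intro h
    exact ⟨Set.univ, isOpen_univ.isLocallyClosed, Set.mem_univ p,
      kappa_homeo (Homeomorph.Set.univ X).symm κ p h⟩
  · rintro ⟨Y, hY, hp, Λ', hΛ'sub, hΛ'card, hΛ'eq⟩
    have := hX.1
    obtain ⟨U, C, hU, hC, rfl⟩ := hY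
    have hpU : p ∈ U := hp.1
    have hZC : closure {p} ⊆ C := closure_minimal (Set.singleton_subset_iff.mpr hp.2) hC
    have hW : IsClosed (closure {p} \ U) := isClosed_closure.sdiff hU
    obtain ⟨T, hTfin, hTcl, hTirr, hTeq⟩ :=
      TopologicalSpace.NoetherianSpace.exists_finite_set_isClosed_irreducible hW
    choose g hg using fun t : T => (hX.2 t (hTcl t t.2) (hTirr t t.2)).exists
    have key : ∀ (x q : (U ∩ C : Set X)), x ∈ closure {q} ↔ (x : X) ∈ closure {(q : X)} := by
      intro x q; rw [closure_subtype, Set.image_singleton]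
    -- p is not in the closure of any point of closure {p} \ {p}
    have hnot : ∀ q : X, q ∈ closure {p} \ {p} → p ∉ closure {q} := by
      intro q hq hpq
      have h1 : closure ({q} : Set X) ⊆ closure {p} :=
        closure_minimal (Set.singleton_subset_iff.mpr hq.1) isClosed_closure
      have h2 : closure ({p} : Set X) ⊆ closure {q} :=
        closure_minimal (Set.singleton_subset_iff.mpr hpq) isClosed_closure
      obtain ⟨w, _, huniq⟩ :=
        hX.2 (closure {p}) isClosed_closure isIrreducible_singleton.closure
      exact hq.2 (Set.mem_singleton_iff.mpr
        ((huniq q (le_antisymm h1 h2)).trans (huniq p rfl).symm))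
    set Λ : Set X := (Subtype.val '' Λ') ∪ Set.range g with hΛdef
    have hΛsub : Λ ⊆ closure {p} \ {p} := by
      rintro x (⟨q, hq, rfl⟩ | ⟨t, rfl⟩)
      · have h := hΛ'sub hq
        exact ⟨(key q ⟨p, hp⟩).mp h.1, fun hx => h.2 (Subtype.ext hx)⟩
      · have hgt : g t ∈ (t : Set X) := (hg t) ▸ subset_closure rfl
        have : g t ∈ closure {p} \ U := hTeq ▸ Set.mem_sUnion.mpr ⟨t, t.2, hgt⟩
        exact ⟨this.1, fun hx => this.2 (hx ▸ hpU)⟩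
    refine ⟨Λ, hΛsub, ?_, ?_⟩
    · have hT : Finite T := hTfin.to_subtype
      have h1 : Cardinal.mk (Subtype.val '' Λ' : Set X) < κ := by
        rwa [Cardinal.mk_image_eq Subtype.val_injective]
      have h2 : Cardinal.mk (Set.range g : Set X) < κ :=
        lt_of_lt_of_le (Set.Finite.lt_aleph0 (Set.finite_range g)) hκ
      exact lt_of_le_of_lt (Cardinal.mk_union_le _ _) (Cardinal.add_lt_of_lt hκ h1 h2)
    · ext x
      constructor
      · rintro ⟨hxZ, hxp⟩
        by_cases hxU : x ∈ U
        · have hxY : x ∈ U ∩ C := ⟨hxU, hZC hxZ⟩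
          have hx' : (⟨x, hxY⟩ : (U ∩ C : Set X)) ∈
              closure {(⟨p, hp⟩ : (U ∩ C : Set X))} \ {⟨p, hp⟩} :=
            ⟨(key _ _).mpr hxZ, fun h => hxp (congrArg Subtype.val h)⟩
          rw [hΛ'eq] at hx'
          obtain ⟨q, hq, hxq⟩ := Set.mem_iUnion₂.mp hx'
          exact Set.mem_biUnion (Set.mem_union_left _ (Set.mem_image_of_mem _ hq))
            ((key _ _).mp hxq)
        · have hxW : x ∈ ⋃₀ T := hTeq ▸ (⟨hxZ, hxU⟩ : x ∈ closure {p} \ U)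
          obtain ⟨t, htT, hxt⟩ := hxW
          exact Set.mem_biUnion (Set.mem_union_right _ ⟨⟨t, htT⟩, rfl⟩)
            ((hg ⟨t, htT⟩).symm ▸ hxt)
      · intro hx
        obtain ⟨q, hqΛ, hxq⟩ := Set.mem_iUnion₂.mp hx
        have hq' := hΛsub hqΛ
        refine ⟨closure_minimal (Set.singleton_subset_iff.mpr hq'.1) isClosed_closure hxq,
          fun hxp => hnot q hq' (hxp ▸ hxq)⟩
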